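/- Let q ∈ ℝ \ {0,1,2,...} and suppose f : (0,t_0) → ℝ is m times differentiable with f(t)/t^q → f_0 ≠ 0 as t → 0⁺. Set g(t) = t^{-q} f(t). Then the following are equivalent: (a) for all 1 ≤ k ≤ m, t^k g^{(k)}(t) → 0 as t → 0⁺; (b) for all 1 ≤ k ≤ m, f^{(k)}(t) / (d^k/dt^k)(f_0 t^q) → 1 as t → 0⁺. -/

import Mathlib

noncomputable section
open Finset

private lemma alg_aux' (q : ℝ) (P : ℕ → ℝ) (hPs : ∀ n : ℕ, P (n+1) = P n * (q - n)) (k : ℕ)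
    (a : ℕ → ℝ) :
    (q - k) * (∑ j ∈ range (k+1), (k.choose j : ℝ) * P (k-j) * a j)
      + ∑ j ∈ range (k+1), (k.choose j : ℝ) * P (k-j) * ((j : ℝ) * a j + a (j+1))
    = ∑ j ∈ range (k+2), ((k+1).choose j : ℝ) * P (k+1-j) * a j := by
  have h1 : (q - k) * (∑ j ∈ range (k+1), (k.choose j : ℝ) * P (k-j) * a j)
      + ∑ j ∈ range (k+1), (k.choose j : ℝ) * P (k-j) * ((j : ℝ) * a j + a (j+1))
      = (∑ j ∈ range (k+1), (q - k + j) * ((k.choose j : ℝ) * P (k-j)) * a j)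
      + ∑ j ∈ range (k+1), ((k.choose j : ℝ) * P (k-j)) * a (j+1) := by
    rw [Finset.mul_sum, ← Finset.sum_add_distrib, ← Finset.sum_add_distrib]
    exact Finset.sum_congr rfl fun j _ => by ring
  have h2 : (∑ j ∈ range (k+1), (q - k + j) * ((k.choose j : ℝ) * P (k-j)) * a j)
      = ∑ j ∈ range (k+2), (q - k + j) * ((k.choose j : ℝ) * P (k-j)) * a j := by
    rw [Finset.sum_range_succ (n := k+1)]
    simp [Nat.choose_succ_self]
  have h3 : (∑ j ∈ range (k+1), ((k.choose j : ℝ) * P (k-j)) * a (j+1))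
      = ∑ j ∈ range (k+2), (if j = 0 then 0 else (k.choose (j-1) : ℝ) * P (k-(j-1))) * a j := by
    rw [Finset.sum_range_succ' (n := k+1)]
    simp
  rw [h1, h2, h3, ← Finset.sum_add_distrib]
  refine Finset.sum_congr rfl fun j hj => ?_
  rw [Finset.mem_range] at hj
  match j, hj with
  | 0, _ =>
    rw [if_pos rfl]
    simp only [Nat.cast_zero, Nat.choose_zero_right, Nat.cast_one, Nat.sub_zero, hPs k]
    ring
  | (i+1), hj =>
    rw [if_neg (Nat.succ_ne_zero i)]
    simp only [Nat.add_sub_cancel]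
    rcases Nat.lt_or_ge i k with hik | hik
    · have hsub : k - (i+1) + 1 = k - i := by omega
      have hcast : ((k - (i+1) : ℕ) : ℝ) = (k : ℝ) - ((i:ℝ)+1) := by
        push_cast [Nat.cast_sub (by omega : i+1 ≤ k)]; ring
      have hPstep : P (k - i) = P (k - (i+1)) * (q - ((k:ℝ) - ((i:ℝ)+1))) := by
        rw [← hsub, hPs, hcast]
      have hchoose : ((k+1).choose (i+1) : ℝ) = (k.choose (i+1) : ℝ) + (k.choose i : ℝ) := by
        rw [Nat.choose_succ_succ]; push_cast; ring
      have hs2 : k + 1 - (i+1) = k - i := by omega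
      rw [hs2, hPstep, hchoose]
      push_cast
      ring
    · have : i = k := by omega
      subst this
      simp only [Nat.choose_succ_self, Nat.cast_zero, Nat.choose_self, Nat.cast_one, Nat.sub_self]
      ring

private lemma key_leibniz' (t0 q : ℝ) (m : ℕ) (f : ℝ → ℝ)
    (hf : ContDiffOn ℝ m f (Set.Ioo 0 t0)) :
    ∀ k : ℕ, k ≤ m → ∀ x ∈ Set.Ioo (0:ℝ) t0,
      iteratedDerivWithin k f (Set.Ioo 0 t0) x =
        x ^ (q - (k:ℝ)) * ∑ j ∈ range (k+1),
          (k.choose j : ℝ) * (∏ i ∈ range (k-j), (q - (i:ℝ))) *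
            (x ^ j * iteratedDerivWithin j (fun t => f t / t ^ q) (Set.Ioo 0 t0) x) := by
  set s : Set ℝ := Set.Ioo 0 t0 with hs
  set g : ℝ → ℝ := fun t => f t / t ^ q with hgdef
  have huniq : UniqueDiffOn ℝ s := uniqueDiffOn_Ioo 0 t0
  have hg : ContDiffOn ℝ m g s := by
    apply hf.div
    · exact fun x hx => (Real.contDiffAt_rpow_const_of_ne hx.1.ne').contDiffWithinAt
    · exact fun x hx => (Real.rpow_pos_of_pos hx.1 q).ne'
  intro k
  induction k with
  | zero =>
    intro _ x hx
    have hxq : x ^ q ≠ 0 := (Real.rpow_pos_of_pos hx.1 q).ne'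
    simp only [iteratedDerivWithin_zero, Nat.cast_zero, sub_zero, range_one, sum_singleton,
      Nat.choose_self, Nat.cast_one, Nat.sub_self, range_zero, prod_empty, pow_zero, one_mul, zero_add]
    simp only [hgdef]
    field_simp
  | succ k IH =>
    intro hk1 x hx
    have hk : k ≤ m := Nat.le_of_succ_le hk1
    have hx0 : (0:ℝ) < x := hx.1
    have hxs : UniqueDiffWithinAt ℝ s x := huniq x hx
    set G : ℕ → ℝ → ℝ := fun j => iteratedDerivWithin j g s with hG
    set P : ℕ → ℝ := fun n => ∏ i ∈ range n, (q - (i:ℝ)) with hPdef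
    have hPs : ∀ n : ℕ, P (n+1) = P n * (q - n) := fun n => Finset.prod_range_succ _ n
    have hB : ∀ j ∈ range (k+1), HasDerivWithinAt
        (fun y => (k.choose j : ℝ) * P (k-j) * (y ^ j * G j y))
        ((k.choose j : ℝ) * P (k-j) * (((j:ℝ) * x ^ (j-1)) * G j x + x ^ j * G (j+1) x)) s x := by
      intro j hj
      rw [Finset.mem_range] at hj
      have hjm : (j : WithTop ℕ∞) < (m : WithTop ℕ∞) := by
        exact_mod_cast (by omega : j < m)
      have hGd : DifferentiableWithinAt ℝ (G j) s x :=
        (hg.differentiableOn_iteratedDerivWithin hjm huniq) x hx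
      have hGder : HasDerivWithinAt (G j) (G (j+1) x) s x := by
        have := hGd.hasDerivWithinAt
        rwa [show derivWithin (G j) s x = G (j+1) x from
          (congrFun iteratedDerivWithin_succ x).symm] at this
      exact (((hasDerivAt_pow j x).hasDerivWithinAt.mul hGder)).const_mul _
    have hS : HasDerivWithinAt
        (fun y => ∑ j ∈ range (k+1), (k.choose j : ℝ) * P (k-j) * (y ^ j * G j y))
        (∑ j ∈ range (k+1), (k.choose j : ℝ) * P (k-j) *
          (((j:ℝ) * x ^ (j-1)) * G j x + x ^ j * G (j+1) x)) s x :=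
      HasDerivWithinAt.fun_sum hB
    have hA : HasDerivWithinAt (fun y => y ^ (q - (k:ℝ)))
        ((q - (k:ℝ)) * x ^ (q - (k:ℝ) - 1)) s x :=
      (Real.hasDerivAt_rpow_const (Or.inl hx0.ne')).hasDerivWithinAt
    have htot := hA.fun_mul hS
    have heq : derivWithin (iteratedDerivWithin k f s) s x =
        derivWithin (fun y => y ^ (q - (k:ℝ)) *
          ∑ j ∈ range (k+1), (k.choose j : ℝ) * P (k-j) * (y ^ j * G j y)) s x := by
      apply derivWithin_congr
      · intro y hy; exact IH hk y hy
      · exact IH hk x hx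
    rw [iteratedDerivWithin_succ, heq, htot.derivWithin hxs]
    have hx1 : x ≠ 0 := hx0.ne'
    have e1 : x ^ (q - (k:ℝ) - 1) = x ^ (q - ((k:ℝ)+1)) := by congr 1; ring
    have e2 : x ^ (q - (k:ℝ)) = x ^ (q - ((k:ℝ)+1)) * x := by
      rw [show q - (k:ℝ) = (q - ((k:ℝ)+1)) + 1 by ring, Real.rpow_add_one hx1]
    have e3 : ((k+1:ℕ) : ℝ) = (k:ℝ) + 1 := by push_cast; ring
    have hmulx : x * (∑ j ∈ range (k+1), (k.choose j : ℝ) * P (k-j) *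
          (((j:ℝ) * x ^ (j-1)) * G j x + x ^ j * G (j+1) x))
        = ∑ j ∈ range (k+1), (k.choose j : ℝ) * P (k-j) *
          ((j:ℝ) * (x ^ j * G j x) + x ^ (j+1) * G (j+1) x) := by
      rw [Finset.mul_sum]
      refine Finset.sum_congr rfl fun j _ => ?_
      match j with
      | 0 => simp; ring
      | (i+1) =>
        have : x * x ^ i = x ^ (i+1) := (pow_succ x i).symm ▸ (mul_comm x (x^i) ▸ rfl)
        simp only [Nat.add_sub_cancel]
        rw [← this]
        ring
    have hcore := alg_aux' q P hPs k (fun j => x ^ j * G j x)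
    simp only [e1, e2, e3]
    calc (q - (k:ℝ)) * (x ^ (q - ((k:ℝ)+1))) * (∑ j ∈ range (k+1),
            (k.choose j : ℝ) * P (k-j) * (x ^ j * G j x))
          + x ^ (q - ((k:ℝ)+1)) * x * (∑ j ∈ range (k+1), (k.choose j : ℝ) * P (k-j) *
          (((j:ℝ) * x ^ (j-1)) * G j x + x ^ j * G (j+1) x))
        = x ^ (q - ((k:ℝ)+1)) * ((q - (k:ℝ)) * (∑ j ∈ range (k+1),
              (k.choose j : ℝ) * P (k-j) * (x ^ j * G j x))
            + ∑ j ∈ range (k+1), (k.choose j : ℝ) * P (k-j) *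
              ((j:ℝ) * (x ^ j * G j x) + x ^ (j+1) * G (j+1) x)) := by
          rw [← hmulx]; ring
      _ = x ^ (q - ((k:ℝ)+1)) * ∑ j ∈ range (k+2),
            ((k+1).choose j : ℝ) * P (k+1-j) * (x ^ j * G j x) := by
          rw [hcore]

private lemma sum_tendsto_aux' (t0 q f0 : ℝ) (f : ℝ → ℝ)
    (hlim : Filter.Tendsto (fun t => f t / t ^ q) (nhdsWithin 0 (Set.Ioi 0)) (nhds f0))
    (K : ℕ) (c : ℕ → ℝ)
    (H : ∀ j : ℕ, 1 ≤ j → j ≤ K →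
      Filter.Tendsto (fun x => x ^ j *
          iteratedDerivWithin j (fun t => f t / t ^ q) (Set.Ioo 0 t0) x)
        (nhdsWithin 0 (Set.Ioi 0)) (nhds 0)) :
    Filter.Tendsto (fun x => ∑ j ∈ range (K+1), c j *
        (x ^ j * iteratedDerivWithin j (fun t => f t / t ^ q) (Set.Ioo 0 t0) x))
      (nhdsWithin 0 (Set.Ioi 0)) (nhds (c 0 * f0)) := by
  have h0 : Filter.Tendsto (fun x => c 0 *
      (x ^ 0 * iteratedDerivWithin 0 (fun t => f t / t ^ q) (Set.Ioo 0 t0) x))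
      (nhdsWithin 0 (Set.Ioi 0)) (nhds (c 0 * f0)) := by
    simp only [pow_zero, one_mul, iteratedDerivWithin_zero]
    exact hlim.const_mul (c 0)
  have htail : Filter.Tendsto (fun x => ∑ j ∈ range K, c (j+1) *
      (x ^ (j+1) * iteratedDerivWithin (j+1) (fun t => f t / t ^ q) (Set.Ioo 0 t0) x))
      (nhdsWithin 0 (Set.Ioi 0)) (nhds 0) := by
    have := tendsto_finset_sum (range K) (fun j hj =>
      ((H (j+1) (by omega) (by rw [Finset.mem_range] at hj; omega)).const_mul (c (j+1))))
    simpa using this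
  have hsum := htail.add h0
  rw [zero_add] at hsum
  exact hsum.congr fun x => (Finset.sum_range_succ' _ K).symm

/-- Lemma `equiv`: let `q ∈ ℝ` not be a nonnegative integer and
`f : (0, t₀) → ℝ` an `m` times differentiable function with
`f(t)/t^q → f₀ ≠ 0` as `t → 0⁺`; set `g(t) = t^{-q} f(t)`.  Then
`t^k g^{(k)}(t) → 0` for all `1 ≤ k ≤ m` if and only if
`f^{(k)}(t) / (d^k/dt^k)(f₀ t^q) → 1` for all `1 ≤ k ≤ m`,
where `(d^k/dt^k)(f₀ t^q) = f₀ · q(q-1)⋯(q-k+1) · t^{q-k}`. -/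
theorem asymptotic_derivative_equivalence
    (t0 q f0 : ℝ) (ht0 : 0 < t0) (hq : ∀ n : ℕ, q ≠ n) (m : ℕ)
    (f : ℝ → ℝ)
    (hf : ContDiffOn ℝ m f (Set.Ioo 0 t0))
    (hf0 : f0 ≠ 0)
    (hlim : Filter.Tendsto (fun t => f t / t ^ q)
      (nhdsWithin 0 (Set.Ioi 0)) (nhds f0)) :
    (∀ k : ℕ, 1 ≤ k → k ≤ m →
        Filter.Tendsto
          (fun t => t ^ k *
            iteratedDerivWithin k (fun t => f t / t ^ q) (Set.Ioo 0 t0) t)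
          (nhdsWithin 0 (Set.Ioi 0)) (nhds 0)) ↔
    (∀ k : ℕ, 1 ≤ k → k ≤ m →
        Filter.Tendsto
          (fun t => iteratedDerivWithin k f (Set.Ioo 0 t0) t /
            (f0 * (∏ i ∈ Finset.range k, (q - (i : ℝ))) * t ^ (q - (k : ℝ))))
          (nhdsWithin 0 (Set.Ioi 0)) (nhds 1)) := by
  have hP : ∀ k : ℕ, (∏ i ∈ range k, (q - (i:ℝ))) ≠ 0 := fun k =>
    Finset.prod_ne_zero_iff.mpr fun i _ => sub_ne_zero_of_ne (hq i)
  have hfP : ∀ k : ℕ, f0 * (∏ i ∈ range k, (q - (i:ℝ))) ≠ 0 := fun k =>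
    mul_ne_zero hf0 (hP k)
  have hev : ∀ᶠ x in nhdsWithin (0:ℝ) (Set.Ioi 0), x ∈ Set.Ioo (0:ℝ) t0 :=
    Ioo_mem_nhdsGT_of_mem ⟨le_refl 0, ht0⟩
  have hkey := key_leibniz' t0 q m f hf
  constructor
  · intro ha k hk1 hkm
    have hS := sum_tendsto_aux' t0 q f0 f hlim k
      (fun j => (k.choose j : ℝ) * (∏ i ∈ range (k-j), (q - (i:ℝ))))
      (fun j h1 h2 => ha j h1 (le_trans h2 hkm))
    have hSd := hS.div_const (f0 * (∏ i ∈ range k, (q - (i:ℝ))))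
    have hlimval : (k.choose 0 : ℝ) * (∏ i ∈ range (k-0), (q - (i:ℝ))) * f0 /
        (f0 * (∏ i ∈ range k, (q - (i:ℝ)))) = 1 := by
      simp only [Nat.choose_zero_right, Nat.cast_one, Nat.sub_zero, one_mul]
      rw [mul_comm]
      exact div_self (hfP k)
    rw [hlimval] at hSd
    refine hSd.congr' ?_
    filter_upwards [hev] with x hx
    have hxq : x ^ (q - (k:ℝ)) ≠ 0 := (Real.rpow_pos_of_pos hx.1 _).ne'
    rw [hkey k hkm x hx, mul_comm (f0 * (∏ i ∈ range k, (q - (i:ℝ)))) (x ^ (q - (k:ℝ)))]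
    exact (mul_div_mul_left _ _ hxq).symm
  · intro hb k
    induction k using Nat.strong_induction_on with
    | _ k IH =>
    intro hk1 hkm
    obtain ⟨n, rfl⟩ : ∃ n, k = n + 1 := ⟨k-1, by omega⟩
    have hS1 := (hb (n+1) hk1 hkm).mul_const (f0 * (∏ i ∈ range (n+1), (q - (i:ℝ))))
    rw [one_mul] at hS1
    have htailsum := sum_tendsto_aux' t0 q f0 f hlim n
      (fun j => ((n+1).choose j : ℝ) * (∏ i ∈ range (n+1-j), (q - (i:ℝ))))
      (fun j h1 h2 => IH j (by omega) h1 (by omega))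
    have hdiff := hS1.sub htailsum
    have hzero : f0 * (∏ i ∈ range (n+1), (q - (i:ℝ))) -
        ((n+1).choose 0 : ℝ) * (∏ i ∈ range (n+1-0), (q - (i:ℝ))) * f0 = 0 := by
      simp only [Nat.choose_zero_right, Nat.cast_one, Nat.sub_zero, one_mul]
      ring
    rw [hzero] at hdiff
    refine hdiff.congr' ?_
    filter_upwards [hev] with x hx
    have hxq : x ^ (q - ((n+1:ℕ):ℝ)) ≠ 0 := (Real.rpow_pos_of_pos hx.1 _).ne'
    have hsum : iteratedDerivWithin (n+1) f (Set.Ioo 0 t0) x /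
        (f0 * (∏ i ∈ range (n+1), (q - (i:ℝ))) * x ^ (q - ((n+1:ℕ):ℝ))) *
        (f0 * (∏ i ∈ range (n+1), (q - (i:ℝ))))
        = ∑ j ∈ range (n+2), ((n+1).choose j : ℝ) * (∏ i ∈ range (n+1-j), (q - (i:ℝ))) *
            (x ^ j * iteratedDerivWithin j (fun t => f t / t ^ q) (Set.Ioo 0 t0) x) := by
      rw [hkey (n+1) hkm x hx,
        mul_comm (f0 * (∏ i ∈ range (n+1), (q - (i:ℝ)))) (x ^ (q - ((n+1:ℕ):ℝ))),
        mul_div_mul_left _ _ hxq, div_mul_cancel₀ _ (hfP (n+1))]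
    rw [hsum, Finset.sum_range_succ]
    simp only [Nat.choose_self, Nat.cast_one, Nat.sub_self, range_zero, prod_empty, one_mul,
      mul_one]
    ring
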